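/- Let G be a finite group, H a subgroup of G, and Q a p-subgroup of G. Then |N_G(Q,H) : H| ≡ |G : H| (mod p), where N_G(Q,H) = { x ∈ G | xQx⁻¹ ≤ H }. -/
import Mathlib


/-- Lemma (counting cosets mod p): if `G` is a finite group, `H ≤ G` and `Q` is a
`p`-subgroup of `G`, then `|N_G(Q,H) : H| ≡ |G : H| (mod p)`, where
`N_G(Q,H) = { x ∈ G | xQx⁻¹ ≤ H }`. -/
theorem counting_cosets_mod_p {G : Type*} [Group G] [Fintype G] (p : ℕ) (hp : p.Prime)
    (H Q : Subgroup G) (hQ : IsPGroup p Q) :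
    Nat.card {x : G // ∀ q ∈ Q, x * q * x⁻¹ ∈ H} / Nat.card H ≡ H.index [MOD p] := by
  classical
  set t : Set (G ⧸ H) := MulAction.fixedPoints Q (G ⧸ H) with ht
  have hmem : ∀ x : G, (∀ q ∈ Q, x * q * x⁻¹ ∈ H) ↔ x⁻¹ ∈ QuotientGroup.mk ⁻¹' t := by
    intro x
    simp only [Set.mem_preimage, MulAction.mem_fixedPoints, ht]
    constructor
    · rintro h ⟨q, hq⟩
      show QuotientGroup.mk (q * x⁻¹) = QuotientGroup.mk x⁻¹
      rw [QuotientGroup.eq]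
      have := h q⁻¹ (Q.inv_mem hq)
      group
      group at this ⊢
      exact this
    · intro h q hq
      have := h ⟨q⁻¹, Q.inv_mem hq⟩
      rw [show (⟨q⁻¹, Q.inv_mem hq⟩ : Q) • (QuotientGroup.mk x⁻¹ : G ⧸ H) = QuotientGroup.mk (q⁻¹ * x⁻¹) from rfl, QuotientGroup.eq] at this
      convert this using 1
      group
  have e : {x : G // ∀ q ∈ Q, x * q * x⁻¹ ∈ H} ≃ (H × t) :=
    ((Equiv.inv G).subtypeEquiv (fun x => hmem x)).trans
      (QuotientGroup.preimageMkEquivSubgroupProdSet H t)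
  have hcard : Nat.card {x : G // ∀ q ∈ Q, x * q * x⁻¹ ∈ H} = Nat.card H * Nat.card t := by
    rw [Nat.card_congr e, Nat.card_prod]
  rw [hcard, Nat.mul_div_cancel_left _ Nat.card_pos]
  haveI : Fact p.Prime := ⟨hp⟩
  have := (hQ.card_modEq_card_fixedPoints (G ⧸ H)).symm
  simpa [Subgroup.index, ht] using this
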